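/- Let S be a finite set of points in ℝ², let K ⊆ sk(S) be a set of already-found skyline points, and let R = {p ∈ S : ∀ k ∈ K, p ≤ k → p = k} be the set of points of S not strictly dominated by any point of K. Then sk(S) = sk(R); moreover, if R is nonempty, then the maximum of R in the lexicographic order (x-coordinate first, then y-coordinate) and the maximum of R in the lexicographic order (y-coordinate first, then x-coordinate) both belong to sk(S). -/

import Mathlib

/-- The skyline (set of maximal elements) of a set of points in the plane,
with the product (componentwise) order. -/
def sk (S : Set (ℝ × ℝ)) : Set (ℝ × ℝ) := {u ∈ S | ∀ v ∈ S, u ≤ v → v = u}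

/-- Lexicographic order on points: compare x-coordinates first, then y-coordinates. -/
def lexXY (p q : ℝ × ℝ) : Prop := p.1 < q.1 ∨ (p.1 = q.1 ∧ p.2 ≤ q.2)

/-- Lexicographic order on points: compare y-coordinates first, then x-coordinates. -/
def lexYX (p q : ℝ × ℝ) : Prop := p.2 < q.2 ∨ (p.2 = q.2 ∧ p.1 ≤ q.1)

theorem stmt_3 (S K : Set (ℝ × ℝ)) (hS : S.Finite) (hK : K ⊆ sk S)
    (R : Set (ℝ × ℝ)) (hR : R = {p ∈ S | ∀ k ∈ K, p ≤ k → p = k}) :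
    sk S = sk R ∧
    (R.Nonempty → ∃ u ∈ R, (∀ p ∈ R, lexXY p u) ∧ u ∈ sk S) ∧
    (R.Nonempty → ∃ v ∈ R, (∀ p ∈ R, lexYX p v) ∧ v ∈ sk S) := by
  have hRS : R ⊆ S := by rw [hR]; exact fun p hp => hp.1
  -- every skyline point is in R
  have hskR : sk S ⊆ R := by
    intro u hu
    rw [hR]
    exact ⟨hu.1, fun k hk hle => (hu.2 k (hK hk).1 hle).symm⟩
  -- every element of S is below some skyline point
  have hbelow : ∀ v ∈ S, ∃ w ∈ sk S, v ≤ w := by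
    intro v hv
    obtain ⟨w, hw, hmax⟩ := Set.Finite.exists_maximalFor id {x ∈ S | v ≤ x}
      (hS.subset (fun x hx => hx.1)) ⟨v, hv, le_rfl⟩
    refine ⟨w, ⟨hw.1, fun c hc hwc => ?_⟩, hw.2⟩
    exact le_antisymm (hmax ⟨hc, hw.2.trans hwc⟩ hwc) hwc
  have hskeq : sk S = sk R := by
    ext u
    constructor
    · intro hu
      exact ⟨hskR hu, fun v hv hle => hu.2 v (hRS hv) hle⟩
    · intro hu
      refine ⟨hRS hu.1, fun v hv hle => ?_⟩
      obtain ⟨w, hw, hvw⟩ := hbelow v hv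
      have : w = u := hu.2 w (hskR hw) (hle.trans hvw)
      exact le_antisymm (hvw.trans this.le) hle
  refine ⟨hskeq, ?_, ?_⟩
  · intro hne
    obtain ⟨u, hu, hmax⟩ := Set.Finite.exists_maximalFor
      (fun p : ℝ × ℝ => toLex p) R (hS.subset hRS) hne
    have hdom : ∀ p ∈ R, lexXY p u := by
      intro p hp
      rcases le_total (toLex p) (toLex u) with h | h
      · rcases Prod.Lex.le_iff |>.1 h with h' | h'
        · exact Or.inl h'
        · exact Or.inr h'
      · obtain rfl : u = p := congrArg ofLex (le_antisymm h (hmax hp h))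
        exact Or.inr ⟨rfl, le_rfl⟩
    refine ⟨u, hu, hdom, ?_⟩
    rw [hskeq]
    refine ⟨hu, fun v hv hle => ?_⟩
    rcases hdom v hv with h | h
    · exact absurd hle.1 (not_le.2 h)
    · exact Prod.ext h.1 (le_antisymm h.2 hle.2)
  · intro hne
    obtain ⟨u, hu, hmax⟩ := Set.Finite.exists_maximalFor
      (fun p : ℝ × ℝ => toLex p.swap) R (hS.subset hRS) hne
    have hdom : ∀ p ∈ R, lexYX p u := by
      intro p hp
      rcases le_total (toLex p.swap) (toLex u.swap) with h | h
      · rcases Prod.Lex.le_iff |>.1 h with h' | h'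
        · exact Or.inl h'
        · exact Or.inr h'
      · have h2 : u.swap = p.swap := congrArg ofLex (le_antisymm h (hmax hp h))
        obtain rfl : u = p := Prod.swap_injective h2
        exact Or.inr ⟨rfl, le_rfl⟩
    refine ⟨u, hu, hdom, ?_⟩
    rw [hskeq]
    refine ⟨hu, fun v hv hle => ?_⟩
    rcases hdom v hv with h | h
    · exact absurd hle.2 (not_le.2 h)
    · exact Prod.ext (le_antisymm h.2 hle.1) h.1
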